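/- With the global phase of each three-fermion Walker–Wang ground state Ψ(M) fixed by the positive-vacuum rule ⟨0|Ψ(M)⟩ > 0, the overlap of the ground states on any two 3-manifolds M, M' embedded in a common ambient complex satisfies ⟨Ψ(M)|Ψ(M')⟩ > 0. -/
import Mathlib

/-!
STATEMENT 8: with the global phases of the three-fermion Walker–Wang ground states fixed
by the positive-vacuum rule `⟨0|Ψ(M)⟩ > 0`, the overlap of ground states on any two
3-manifolds `M, M'` embedded in a common ambient complex is positive:
`⟨Ψ(M)|Ψ(M')⟩ > 0`.  The ground states are expanded in the string-configuration basis
with (unnormalized) amplitudes in `{0, ±1}`; the key fact, coming from the well-defined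
cycle-to-amplitude function on the union complex `M ∪ M'` (Lemma `1-cycle-to-amplitude`),
is that on a configuration where both amplitudes are nonzero they both agree with the
amplitude `ψu` of the ground state of the union complex.
-/

theorem stmt_8 {Conf : Type*} [Fintype Conf] (vac : Conf)
    (ψ ψ' ψu : Conf → ℝ)
    (hval : ∀ s, ψ s = 0 ∨ ψ s = 1 ∨ ψ s = -1)
    (hval' : ∀ s, ψ' s = 0 ∨ ψ' s = 1 ∨ ψ' s = -1)
    (hvac : 0 < ψ vac) (hvac' : 0 < ψ' vac)
    (hkey : ∀ s, ψ s ≠ 0 → ψ' s ≠ 0 → ψ s = ψu s ∧ ψ' s = ψu s) :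
    0 < ∑ s, ψ s * ψ' s := by
  have hnn : ∀ s, 0 ≤ ψ s * ψ' s := by
    intro s
    by_cases h : ψ s = 0
    · simp [h]
    by_cases h' : ψ' s = 0
    · simp [h']
    obtain ⟨e1, e2⟩ := hkey s h h'
    rw [e1, e2]
    exact mul_self_nonneg _
  have hvacpos : 0 < ψ vac * ψ' vac := mul_pos hvac hvac'
  exact Finset.sum_pos' (fun s _ => hnn s) ⟨vac, Finset.mem_univ _, hvacpos⟩
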